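/- Let M be a free abelian group of finite rank, V and W subgroups of M, and φ : V → W a group isomorphism. For every integer k ≥ 1, let V_k = { v ∈ V : φ^j(v) ∈ V for all 0 ≤ j < k } and let φ^k : V_k → φ^k(V_k) be the k-fold composite of φ, a group isomorphism onto its image. Then D_{φ^k} = D_φ and the associated automorphism satisfies (φ^k)~ = (φ̃)^k; moreover D_{φ^{-1}} = D_φ and (φ^{-1})~ = (φ̃)^{-1}. -/

import Mathlib

set_option synthInstance.maxHeartbeats 1000000
set_option maxHeartbeats 1000000


/-!
Setting: `M = ℤ^n` is a free abelian group of finite rank, `V, W` are subgroups of `M`,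
and `φ : V ≃+ W` is a group isomorphism.  Inside `M ⊗ ℚ = ℚ^n`, a subgroup `U` of `M`
is identified with the `ℚ`-subspace `U ⊗ ℚ` spanned by its image, and `φ_ℚ` denotes the
unique `ℚ`-linear extension of `φ` to `V ⊗ ℚ`.
-/

/-- The canonical embedding of `ℤ^n` into `ℚ^n` (i.e. `M → M ⊗ ℚ`). -/
def embQ (n : ℕ) (x : Fin n → ℤ) : Fin n → ℚ := fun i => (x i : ℚ)

/-- `U ⊗ ℚ`, the `ℚ`-subspace of `ℚ^n` spanned by the image of a subgroup `U` of `ℤ^n`. -/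
def qSpan (n : ℕ) (U : AddSubgroup (Fin n → ℤ)) : Submodule ℚ (Fin n → ℚ) :=
  Submodule.span ℚ (embQ n '' (U : Set (Fin n → ℤ)))

/-- `RelQ V W φ x y` expresses that `x ∈ V ⊗ ℚ` and `φ_ℚ (x) = y`, where `φ_ℚ` is the
unique `ℚ`-linear extension of `φ : V ≃+ W`: there is a nonzero integer `p` clearing the
denominators of `x`, with `p • x ∈ V` and `φ (p • x) = p • y`. -/
def RelQ {n : ℕ} (V W : AddSubgroup (Fin n → ℤ)) (φ : V ≃+ W)
    (x y : Fin n → ℚ) : Prop :=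
  ∃ p : ℤ, p ≠ 0 ∧ ∃ v : V, embQ n (v : Fin n → ℤ) = p • x ∧
    embQ n ((φ v : W) : Fin n → ℤ) = p • y

/-- `D_φ`: the set of `x ∈ (V ∩ W) ⊗ ℚ` admitting a full backward orbit
`(x_k)_{k ≥ 0}` under `φ_ℚ` inside `(V ∩ W) ⊗ ℚ`, i.e. `x_0 = x` and
`φ_ℚ (x_{k+1}) = x_k` for all `k`. -/
def DSet {n : ℕ} (V W : AddSubgroup (Fin n → ℤ)) (φ : V ≃+ W) : Set (Fin n → ℚ) :=
  {x | ∃ xs : ℕ → (Fin n → ℚ), xs 0 = x ∧ (∀ k, xs k ∈ qSpan n (V ⊓ W)) ∧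
      ∀ k, RelQ V W φ (xs (k + 1)) (xs k)}


/-- `IntRel V W φ v w`: `v ∈ V` and `φ (v) = w` (as elements of `M = ℤ^n`). -/
def IntRel {n : ℕ} (V W : AddSubgroup (Fin n → ℤ)) (φ : V ≃+ W)
    (v w : Fin n → ℤ) : Prop :=
  ∃ hv : v ∈ V, ((φ ⟨v, hv⟩ : W) : Fin n → ℤ) = w

/-- `IntRelIter V W φ k v w`: the `k`-th iterate of `φ` is defined at `v` (i.e. `v ∈ V_k`,
that is `φ^j (v) ∈ V` for all `0 ≤ j < k`) and `φ^k (v) = w`.  In particular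
`V_k = {v | ∃ w, IntRelIter V W φ k v w}` and `W_k = φ^k (V_k) = {w | ∃ v, IntRelIter V W φ k v w}`. -/
def IntRelIter {n : ℕ} (V W : AddSubgroup (Fin n → ℤ)) (φ : V ≃+ W) :
    ℕ → (Fin n → ℤ) → (Fin n → ℤ) → Prop
  | 0, v, w => v = w
  | (k + 1), v, w => ∃ u, IntRel V W φ v u ∧ IntRelIter V W φ k u w

/-- `RelPowQ V W φ k x y`: `x ∈ V_k ⊗ ℚ` and `(φ^k)_ℚ (x) = y`, where `φ^k : V_k → W_k`
is the `k`-fold composite of `φ`. -/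
def RelPowQ {n : ℕ} (V W : AddSubgroup (Fin n → ℤ)) (φ : V ≃+ W) (k : ℕ)
    (x y : Fin n → ℚ) : Prop :=
  ∃ p : ℤ, p ≠ 0 ∧ ∃ v w : Fin n → ℤ, IntRelIter V W φ k v w ∧
    embQ n v = p • x ∧ embQ n w = p • y

/-- `x ∈ (V_k ⊓ W_k) ⊗ ℚ`, where `V_k` is the domain of `φ^k` and `W_k = φ^k (V_k)` is
the domain of `φ^{-k}`. -/
def memDomQ {n : ℕ} (V W : AddSubgroup (Fin n → ℤ)) (φ : V ≃+ W) (k : ℕ)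
    (x : Fin n → ℚ) : Prop :=
  ∃ p : ℤ, p ≠ 0 ∧ ∃ v : Fin n → ℤ, embQ n v = p • x ∧
    (∃ w, IntRelIter V W φ k v w) ∧ (∃ u, IntRelIter V W φ k u v)

/-- `D_{φ^k}`: the set `D_ψ` associated to the group isomorphism `ψ = φ^k : V_k → W_k`,
namely the `x ∈ (V_k ∩ W_k) ⊗ ℚ` with a full backward orbit under `(φ^k)_ℚ` inside
`(V_k ∩ W_k) ⊗ ℚ`. -/
def DSetPow {n : ℕ} (V W : AddSubgroup (Fin n → ℤ)) (φ : V ≃+ W) (k : ℕ) :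
    Set (Fin n → ℚ) :=
  {x | ∃ xs : ℕ → (Fin n → ℚ), xs 0 = x ∧ (∀ m, memDomQ V W φ k (xs m)) ∧
      ∀ m, RelPowQ V W φ k (xs (m + 1)) (xs m)}

/-- `RelQIter V W φ k x y`: the `k`-th iterate of `φ_ℚ` is defined at `x` and
`φ_ℚ^k (x) = y`; for `x ∈ D_φ` this says precisely `(φ̃)^k (x) = y`. -/
def RelQIter {n : ℕ} (V W : AddSubgroup (Fin n → ℤ)) (φ : V ≃+ W) :
    ℕ → (Fin n → ℚ) → (Fin n → ℚ) → Prop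
  | 0, x, y => x = y
  | (k + 1), x, y => ∃ z, RelQ V W φ x z ∧ RelQIter V W φ k z y


section Basics
variable {n : ℕ}

lemma embQ_injective : Function.Injective (embQ n) := by
  intro a b h
  funext i
  have := congrFun h i
  simpa [embQ] using this

lemma embQ_add (a b : Fin n → ℤ) : embQ n (a + b) = embQ n a + embQ n b := by
  funext i; simp [embQ]

lemma embQ_zsmul (c : ℤ) (a : Fin n → ℤ) : embQ n (c • a) = c • embQ n a := by
  funext i; simp [embQ]

lemma embQ_zero : embQ n (0 : Fin n → ℤ) = 0 := by funext i; simp [embQ]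

lemma zsmul_eq_qsmul (c : ℤ) (x : Fin n → ℚ) : c • x = (c : ℚ) • x := by
  funext i; simp

lemma mem_qSpan_iff {U : AddSubgroup (Fin n → ℤ)} {x : Fin n → ℚ} :
    x ∈ qSpan n U ↔ ∃ p : ℤ, p ≠ 0 ∧ ∃ u ∈ U, embQ n u = p • x := by
  constructor
  · intro hx
    induction hx using Submodule.span_induction with
    | mem z hz =>
      obtain ⟨u, hu, rfl⟩ := hz
      exact ⟨1, one_ne_zero, u, hu, by simp [zsmul_eq_qsmul]⟩
    | zero => exact ⟨1, one_ne_zero, 0, U.zero_mem, by simp [embQ_zero]⟩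
    | add a b _ _ iha ihb =>
      obtain ⟨p, hp, u, hu, hemb⟩ := iha
      obtain ⟨q, hq, u', hu', hemb'⟩ := ihb
      refine ⟨p * q, mul_ne_zero hp hq, q • u + p • u', ?_, ?_⟩
      · exact U.add_mem (U.zsmul_mem hu q) (U.zsmul_mem hu' p)
      · rw [embQ_add, embQ_zsmul, embQ_zsmul, hemb, hemb', smul_add]
        simp only [zsmul_eq_qsmul, smul_smul]
        push_cast
        rw [mul_comm (q:ℚ) (p:ℚ)]
    | smul c a _ ih =>
      obtain ⟨p, hp, u, hu, hemb⟩ := ih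
      refine ⟨p * c.den, mul_ne_zero hp (by exact_mod_cast c.den_ne_zero), c.num • u,
        U.zsmul_mem hu c.num, ?_⟩
      rw [embQ_zsmul, hemb]
      simp only [zsmul_eq_qsmul, smul_smul]
      push_cast
      congr 1
      have hc : (c.den : ℚ) * c = (c.num : ℚ) := by
        have hd : (c.den : ℚ) ≠ 0 := by exact_mod_cast c.den_ne_zero
        exact Rat.den_mul_eq_num c
      rw [mul_assoc, hc]
      ring
  · rintro ⟨p, hp, u, hu, hemb⟩
    have hx : x = (p : ℚ)⁻¹ • embQ n u := by
      rw [hemb, zsmul_eq_qsmul, smul_smul, inv_mul_cancel₀ (by exact_mod_cast hp), one_smul]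
    rw [hx]
    exact Submodule.smul_mem _ _ (Submodule.subset_span ⟨u, hu, rfl⟩)

lemma mem_qSpan_inf {U U' : AddSubgroup (Fin n → ℤ)} {x : Fin n → ℚ} :
    x ∈ qSpan n (U ⊓ U') ↔ x ∈ qSpan n U ∧ x ∈ qSpan n U' := by
  constructor
  · intro hx
    rw [mem_qSpan_iff] at hx
    obtain ⟨p, hp, u, hu, hemb⟩ := hx
    exact ⟨mem_qSpan_iff.2 ⟨p, hp, u, hu.1, hemb⟩, mem_qSpan_iff.2 ⟨p, hp, u, hu.2, hemb⟩⟩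
  · rintro ⟨h1, h2⟩
    rw [mem_qSpan_iff] at h1 h2 ⊢
    obtain ⟨p, hp, u, hu, hemb⟩ := h1
    obtain ⟨q, hq, u', hu', hemb'⟩ := h2
    have : q • u = p • u' := by
      apply embQ_injective
      rw [embQ_zsmul, embQ_zsmul, hemb, hemb', smul_comm]
    refine ⟨p * q, mul_ne_zero hp hq, q • u, ⟨U.zsmul_mem hu q, this ▸ U'.zsmul_mem hu' p⟩, ?_⟩
    rw [embQ_zsmul, hemb, smul_smul, mul_comm]

end Basics

section RelQLemmas
variable {n : ℕ} {V W : AddSubgroup (Fin n → ℤ)} {φ : V ≃+ W}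

lemma relQ_symm {x y : Fin n → ℚ} :
    RelQ V W φ x y ↔ RelQ W V φ.symm y x := by
  constructor
  · rintro ⟨p, hp, v, hv, hw⟩
    exact ⟨p, hp, φ v, hw, by rw [φ.symm_apply_apply]; exact hv⟩
  · rintro ⟨p, hp, w, hw, hv⟩
    exact ⟨p, hp, φ.symm w, hv, by rw [φ.apply_symm_apply]; exact hw⟩

lemma relQ_unique_right {x y y' : Fin n → ℚ}
    (h : RelQ V W φ x y) (h' : RelQ V W φ x y') : y = y' := by
  obtain ⟨p, hp, v, hv, hw⟩ := h
  obtain ⟨p', hp', v', hv', hw'⟩ := h'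
  have hvv : (p' • v : V) = p • v' := by
    apply Subtype.ext
    apply embQ_injective
    push_cast
    rw [embQ_zsmul, embQ_zsmul, hv, hv', smul_comm]
  have : embQ n ((φ (p' • v) : W) : Fin n → ℤ) = embQ n ((φ (p • v') : W) : Fin n → ℤ) := by
    rw [hvv]
  rw [map_zsmul, map_zsmul] at this
  push_cast at this
  rw [embQ_zsmul, embQ_zsmul, hw, hw'] at this
  have hpp : (p' * p) • y = (p * p') • y' := by
    rw [← smul_smul, ← smul_smul]; exact this
  rw [mul_comm] at hpp
  have hppne : ((p * p' : ℤ) : ℚ) ≠ 0 := by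
    exact_mod_cast mul_ne_zero hp hp'
  rw [zsmul_eq_qsmul, zsmul_eq_qsmul] at hpp
  exact smul_right_injective (Fin n → ℚ) hppne hpp

lemma relQ_unique_left {x x' y : Fin n → ℚ}
    (h : RelQ V W φ x y) (h' : RelQ V W φ x' y) : x = x' :=
  relQ_unique_right (relQ_symm.1 h) (relQ_symm.1 h')

lemma relQ_add {x y x' y' : Fin n → ℚ}
    (h : RelQ V W φ x y) (h' : RelQ V W φ x' y') : RelQ V W φ (x + x') (y + y') := by
  obtain ⟨p, hp, v, hv, hw⟩ := h
  obtain ⟨p', hp', v', hv', hw'⟩ := h'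
  refine ⟨p * p', mul_ne_zero hp hp', p' • v + p • v', ?_, ?_⟩
  · push_cast
    rw [embQ_add, embQ_zsmul, embQ_zsmul, hv, hv', smul_add]
    simp only [smul_smul]
    rw [mul_comm p' p]
  · rw [map_add, map_zsmul, map_zsmul]
    push_cast
    rw [embQ_add, embQ_zsmul, embQ_zsmul, hw, hw', smul_add]
    simp only [smul_smul]
    rw [mul_comm p' p]

lemma relQ_smul {x y : Fin n → ℚ} (c : ℚ)
    (h : RelQ V W φ x y) : RelQ V W φ (c • x) (c • y) := by
  obtain ⟨p, hp, v, hv, hw⟩ := h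
  have hc : (c.den : ℚ) * c = (c.num : ℚ) := by
    have hd : (c.den : ℚ) ≠ 0 := by exact_mod_cast c.den_ne_zero
    exact Rat.den_mul_eq_num c
  refine ⟨p * c.den, mul_ne_zero hp (by exact_mod_cast c.den_ne_zero), c.num • v, ?_, ?_⟩
  · push_cast
    rw [embQ_zsmul, hv]
    simp only [zsmul_eq_qsmul, smul_smul]
    push_cast
    rw [mul_assoc, hc]
    ring_nf
  · rw [map_zsmul]
    push_cast
    rw [embQ_zsmul, hw]
    simp only [zsmul_eq_qsmul, smul_smul]
    push_cast
    rw [mul_assoc, hc]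
    ring_nf

lemma relQ_zero : RelQ V W φ 0 0 :=
  ⟨1, one_ne_zero, 0, by simp [embQ_zero], by simp [embQ_zero]⟩

lemma relQ_mem_left {x y : Fin n → ℚ} (h : RelQ V W φ x y) : x ∈ qSpan n V := by
  obtain ⟨p, hp, v, hv, _⟩ := h
  exact mem_qSpan_iff.2 ⟨p, hp, v, v.2, hv⟩

lemma relQ_mem_right {x y : Fin n → ℚ} (h : RelQ V W φ x y) : y ∈ qSpan n W := by
  obtain ⟨p, hp, v, _, hw⟩ := h
  exact mem_qSpan_iff.2 ⟨p, hp, φ v, (φ v).2, hw⟩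

end RelQLemmas

section DSetLemmas
variable {n : ℕ} {V W : AddSubgroup (Fin n → ℤ)} {φ : V ≃+ W}

lemma dset_mem_qSpan {x : Fin n → ℚ} (hx : x ∈ DSet V W φ) : x ∈ qSpan n (V ⊓ W) := by
  obtain ⟨xs, h0, hmem, _⟩ := hx
  exact h0 ▸ hmem 0

lemma dset_seq_mem {xs : ℕ → (Fin n → ℚ)} (hmem : ∀ k, xs k ∈ qSpan n (V ⊓ W))
    (hrel : ∀ k, RelQ V W φ (xs (k + 1)) (xs k)) (i : ℕ) : xs i ∈ DSet V W φ :=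
  ⟨fun k => xs (i + k), by simp, fun k => hmem (i + k), fun k => by
    show RelQ V W φ (xs (i + (k + 1))) (xs (i + k))
    rw [← Nat.add_assoc]
    exact hrel (i + k)⟩

lemma dset_pred {x : Fin n → ℚ} (hx : x ∈ DSet V W φ) :
    ∃ x', x' ∈ DSet V W φ ∧ RelQ V W φ x' x := by
  obtain ⟨xs, h0, hmem, hrel⟩ := hx
  exact ⟨xs 1, dset_seq_mem hmem hrel 1, h0 ▸ hrel 0⟩

/-- `D_φ` as a `ℚ`-subspace. -/
def Dsub (V W : AddSubgroup (Fin n → ℤ)) (φ : V ≃+ W) : Submodule ℚ (Fin n → ℚ) where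
  carrier := DSet V W φ
  zero_mem' := ⟨fun _ => 0, rfl, fun _ => Submodule.zero_mem _, fun _ => relQ_zero⟩
  add_mem' := by
    rintro a b ⟨xs, hx0, hxm, hxr⟩ ⟨ys, hy0, hym, hyr⟩
    exact ⟨fun k => xs k + ys k, by show xs 0 + ys 0 = a + b; rw [hx0, hy0],
      fun k => Submodule.add_mem _ (hxm k) (hym k),
      fun k => relQ_add (hxr k) (hyr k)⟩
  smul_mem' := by
    rintro c a ⟨xs, hx0, hxm, hxr⟩
    exact ⟨fun k => c • xs k, by show c • xs 0 = c • a; rw [hx0],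
      fun k => Submodule.smul_mem _ _ (hxm k),
      fun k => relQ_smul c (hxr k)⟩

lemma mem_Dsub {x : Fin n → ℚ} : x ∈ Dsub V W φ ↔ x ∈ DSet V W φ := Iff.rfl

/-- The backward map `φ̃⁻¹ : D_φ → D_φ`. -/
noncomputable def psiMap (V : AddSubgroup (Fin n → ℤ)) (W : AddSubgroup (Fin n → ℤ))
    (φ : V ≃+ W) : Dsub V W φ →ₗ[ℚ] Dsub V W φ where
  toFun x := ⟨Classical.choose (dset_pred x.2),
    (Classical.choose_spec (dset_pred x.2)).1⟩
  map_add' x y := by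
    apply Subtype.ext
    have hx := (Classical.choose_spec (dset_pred x.2)).2
    have hy := (Classical.choose_spec (dset_pred y.2)).2
    have hxy := (Classical.choose_spec (dset_pred (x + y).2)).2
    exact relQ_unique_left hxy (relQ_add hx hy)
  map_smul' c x := by
    apply Subtype.ext
    have hx := (Classical.choose_spec (dset_pred x.2)).2
    have hcx := (Classical.choose_spec (dset_pred (c • x).2)).2
    exact relQ_unique_left hcx (relQ_smul c hx)

lemma psiMap_rel (x : Dsub V W φ) : RelQ V W φ (psiMap V W φ x : Fin n → ℚ) x :=
  (Classical.choose_spec (dset_pred x.2)).2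

lemma psiMap_injective : Function.Injective (psiMap V W φ) := by
  intro x y h
  apply Subtype.ext
  have hx := psiMap_rel (V := V) (W := W) (φ := φ) x
  have hy := psiMap_rel (V := V) (W := W) (φ := φ) y
  rw [h] at hx
  exact relQ_unique_right hx hy

lemma psiMap_surjective : Function.Surjective (psiMap V W φ) :=
  (LinearMap.injective_iff_surjective).1 psiMap_injective

/-- Forward invariance of `D_φ`. -/
lemma dset_succ {x : Fin n → ℚ} (hx : x ∈ DSet V W φ) :
    ∃ y, y ∈ DSet V W φ ∧ RelQ V W φ x y := by
  obtain ⟨z, hz⟩ := psiMap_surjective (V := V) (W := W) (φ := φ) ⟨x, hx⟩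
  have := psiMap_rel (V := V) (W := W) (φ := φ) z
  rw [hz] at this
  exact ⟨z, z.2, this⟩

/-- A full forward orbit inside `D_φ`. -/
lemma dset_forward_orbit {x : Fin n → ℚ} (hx : x ∈ DSet V W φ) :
    ∃ f : ℕ → (Fin n → ℚ), f 0 = x ∧ (∀ i, f i ∈ DSet V W φ) ∧
      ∀ i, RelQ V W φ (f i) (f (i + 1)) := by
  have step : ∀ z : {z : Fin n → ℚ // z ∈ DSet V W φ}, {y : Fin n → ℚ // y ∈ DSet V W φ ∧ RelQ V W φ z y} :=
    fun z => ⟨Classical.choose (dset_succ z.2), Classical.choose_spec (dset_succ z.2)⟩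
  let g : ℕ → {z : Fin n → ℚ // z ∈ DSet V W φ} := fun i =>
    Nat.rec ⟨x, hx⟩ (fun _ z => ⟨(step z).1, (step z).2.1⟩) i
  refine ⟨fun i => (g i).1, rfl, fun i => (g i).2, fun i => ?_⟩
  exact (step (g i)).2.2

end DSetLemmas

section IterLemmas
variable {n : ℕ} {V W : AddSubgroup (Fin n → ℤ)} {φ : V ≃+ W}

lemma intRel_smul {v w : Fin n → ℤ} (c : ℤ) (h : IntRel V W φ v w) :
    IntRel V W φ (c • v) (c • w) := by
  obtain ⟨hv, hw⟩ := h
  refine ⟨V.zsmul_mem hv c, ?_⟩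
  have : (⟨c • v, V.zsmul_mem hv c⟩ : V) = c • (⟨v, hv⟩ : V) := rfl
  rw [this, map_zsmul]
  push_cast
  rw [hw]

lemma intRelIter_smul {v w : Fin n → ℤ} (c : ℤ) :
    ∀ k, IntRelIter V W φ k v w → IntRelIter V W φ k (c • v) (c • w) := by
  intro k
  induction k generalizing v w with
  | zero => intro h; rw [h]; rfl
  | succ k ih =>
    rintro ⟨u, hr, hi⟩
    exact ⟨c • u, intRel_smul c hr, ih hi⟩

lemma intRelIter_left_mem {v w : Fin n → ℤ} {k : ℕ} (hk : 1 ≤ k)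
    (h : IntRelIter V W φ k v w) : v ∈ V := by
  cases k with
  | zero => omega
  | succ k =>
    obtain ⟨u, ⟨hv, _⟩, _⟩ := h
    exact hv

lemma intRelIter_right_mem {v w : Fin n → ℤ} : ∀ {k : ℕ}, 1 ≤ k →
    IntRelIter V W φ k v w → w ∈ W := by
  intro k
  induction k generalizing v w with
  | zero => intro h; omega
  | succ k ih =>
    rintro - ⟨u, ⟨hv, hw⟩, hi⟩
    rcases Nat.eq_zero_or_pos k with rfl | hk
    · have : u = w := hi
      rw [← this, ← hw]
      exact (φ ⟨v, hv⟩).2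
    · exact ih hk hi

lemma relQIter_comp {x z y : Fin n → ℚ} :
    ∀ {a b : ℕ}, RelQIter V W φ a x z → RelQIter V W φ b z y →
      RelQIter V W φ (a + b) x y := by
  intro a
  induction a generalizing x with
  | zero => intro b h h'; have : x = z := h; rw [Nat.zero_add, this]; exact h'
  | succ a ih =>
    rintro b ⟨x₁, hr, hi⟩ h'
    rw [Nat.succ_add]
    exact ⟨x₁, hr, ih hi h'⟩

lemma relQIter_split {x y : Fin n → ℚ} :
    ∀ {a b : ℕ}, RelQIter V W φ (a + b) x y →
      ∃ z, RelQIter V W φ a x z ∧ RelQIter V W φ b z y := by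
  intro a
  induction a generalizing x with
  | zero => intro b h; rw [Nat.zero_add] at h; exact ⟨x, rfl, h⟩
  | succ a ih =>
    intro b h
    rw [Nat.succ_add] at h
    obtain ⟨x₁, hr, hi⟩ := h
    obtain ⟨z, h1, h2⟩ := ih hi
    exact ⟨z, ⟨x₁, hr, h1⟩, h2⟩

lemma relQIter_unique_left {a b c : Fin n → ℚ} :
    ∀ {j : ℕ}, RelQIter V W φ j a c → RelQIter V W φ j b c → a = b := by
  intro j
  induction j generalizing a b with
  | zero => intro h h'; exact h.trans h'.symm
  | succ j ih =>
    rintro ⟨a₁, hra, hia⟩ ⟨b₁, hrb, hib⟩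
    have : a₁ = b₁ := ih hia hib
    rw [this] at hra
    exact relQ_unique_left hra hrb

lemma relQIter_unique_right {a b c : Fin n → ℚ} :
    ∀ {j : ℕ}, RelQIter V W φ j a b → RelQIter V W φ j a c → b = c := by
  intro j
  induction j generalizing a with
  | zero => intro h h'; exact h.symm.trans h'
  | succ j ih =>
    rintro ⟨a₁, hra, hia⟩ ⟨a₂, hra', hia'⟩
    have : a₁ = a₂ := relQ_unique_right hra hra'
    rw [this] at hia
    exact ih hia hia'

lemma exists_clear_denom (x : Fin n → ℚ) :
    ∃ p : ℤ, p ≠ 0 ∧ ∃ v : Fin n → ℤ, embQ n v = p • x := by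
  refine ⟨∏ i, ((x i).den : ℤ), ?_, ?_⟩
  · exact Finset.prod_ne_zero_iff.2 fun i _ => by exact_mod_cast (x i).den_ne_zero
  · have hdvd : ∀ i : Fin n, ((x i).den : ℤ) ∣ ∏ j, ((x j).den : ℤ) :=
      fun i => Finset.dvd_prod_of_mem _ (Finset.mem_univ i)
    choose c hc using hdvd
    refine ⟨fun i => c i * (x i).num, ?_⟩
    funext i
    show ((c i * (x i).num : ℤ) : ℚ) = _
    have hden : ((x i).den : ℚ) * x i = ((x i).num : ℚ) := by
      have hd : ((x i).den : ℚ) ≠ 0 := by exact_mod_cast (x i).den_ne_zero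
      exact Rat.den_mul_eq_num (x i)
    have : ((∏ j, ((x j).den : ℤ) : ℤ) : ℚ) = ((x i).den : ℚ) * (c i : ℚ) := by
      exact_mod_cast congrArg (fun z : ℤ => (z : ℚ)) (hc i)
    show _ = (∏ j, ((x j).den : ℤ)) • x i
    rw [zsmul_eq_mul, this]
    push_cast
    rw [mul_comm ((x i).den : ℚ) (c i : ℚ), mul_assoc, hden]

lemma relPowQ_iff_relQIter {k : ℕ} {x y : Fin n → ℚ} :
    RelPowQ V W φ k x y ↔ RelQIter V W φ k x y := by
  constructor
  · intro h
    induction k generalizing x y with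
    | zero =>
      obtain ⟨p, hp, v, w, hvw, hv, hw⟩ := h
      have hvw' : v = w := hvw
      subst hvw'
      rw [hv] at hw
      have hpq : ((p : ℤ) : ℚ) ≠ 0 := by exact_mod_cast hp
      rw [zsmul_eq_qsmul, zsmul_eq_qsmul] at hw
      show x = y
      exact smul_right_injective (Fin n → ℚ) hpq hw
    | succ k ih =>
      obtain ⟨p, hp, v, w, ⟨u, ⟨hv, hφ⟩, hiter⟩, hvx, hwy⟩ := h
      have hpq : ((p : ℤ) : ℚ) ≠ 0 := by exact_mod_cast hp
      refine ⟨(p : ℚ)⁻¹ • embQ n u, ⟨p, hp, ⟨v, hv⟩, hvx, ?_⟩, ih ⟨p, hp, u, w, hiter, ?_, hwy⟩⟩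
      · rw [hφ, zsmul_eq_qsmul, smul_smul, mul_inv_cancel₀ hpq, one_smul]
      · rw [zsmul_eq_qsmul, smul_smul, mul_inv_cancel₀ hpq, one_smul]
  · intro h
    induction k generalizing x y with
    | zero =>
      have : x = y := h
      obtain ⟨p, hp, v, hv⟩ := exists_clear_denom x
      exact ⟨p, hp, v, v, rfl, hv, this ▸ hv⟩
    | succ k ih =>
      obtain ⟨z, ⟨p, hp, v, hvx, hφz⟩, hiter⟩ := h
      obtain ⟨p', hp', v', w', hint, hvz, hwy⟩ := ih hiter
      have key : ((φ (p' • v) : W) : Fin n → ℤ) = p • v' := by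
        apply embQ_injective
        rw [map_zsmul]
        push_cast
        rw [embQ_zsmul, embQ_zsmul, hφz, hvz, smul_comm]
      refine ⟨p * p', mul_ne_zero hp hp', p' • (v : Fin n → ℤ), p • w',
        ⟨p • v', ⟨?_, ?_⟩, intRelIter_smul p k hint⟩, ?_, ?_⟩
      · exact V.zsmul_mem v.2 p'
      · have : (⟨p' • (v : Fin n → ℤ), V.zsmul_mem v.2 p'⟩ : V) = p' • v := rfl
        rw [this]
        exact key
      · rw [embQ_zsmul, hvx, smul_smul, mul_comm]
      · rw [embQ_zsmul, hwy, smul_smul]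

end IterLemmas

section Assembly
variable {n : ℕ} {V W : AddSubgroup (Fin n → ℤ)} {φ : V ≃+ W}

lemma dset_subset_symm : DSet V W φ ⊆ DSet W V φ.symm := by
  intro x hx
  obtain ⟨f, hf0, hfmem, hfrel⟩ := dset_forward_orbit hx
  refine ⟨f, hf0, fun m => ?_, fun m => relQ_symm.1 (hfrel m)⟩
  have := dset_mem_qSpan (hfmem m)
  rw [mem_qSpan_inf] at this ⊢
  exact ⟨this.2, this.1⟩

lemma dset_symm_eq : DSet W V φ.symm = DSet V W φ := by
  apply Set.Subset.antisymm
  · intro x hx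
    have := dset_subset_symm (V := W) (W := V) (φ := φ.symm) hx
    rwa [AddEquiv.symm_symm] at this
  · exact dset_subset_symm

lemma relQIter_backward {xs : ℕ → (Fin n → ℚ)}
    (hrel : ∀ m, RelQ V W φ (xs (m + 1)) (xs m)) (i : ℕ) :
    ∀ j, RelQIter V W φ j (xs (i + j)) (xs i) := by
  intro j
  induction j with
  | zero => rfl
  | succ j ih =>
    have h1 : RelQ V W φ (xs (i + j + 1)) (xs (i + j)) := hrel (i + j)
    have : RelQIter V W φ (1 + j) (xs (i + (j + 1))) (xs i) := by
      rw [← Nat.add_assoc]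
      exact relQIter_comp (a := 1) (b := j) ⟨xs (i + j), h1, rfl⟩ ih
    rwa [Nat.add_comm 1 j] at this

lemma dset_relQIter_forward {z : Fin n → ℚ} (hz : z ∈ DSet V W φ) (j : ℕ) :
    ∃ y, RelQIter V W φ j z y := by
  obtain ⟨f, hf0, _, hfrel⟩ := dset_forward_orbit hz
  refine ⟨f j, ?_⟩
  have : ∀ j, RelQIter V W φ j (f 0) (f j) := by
    intro j
    induction j with
    | zero => rfl
    | succ j ih =>
      have := relQIter_comp (a := j) (b := 1) ih ⟨f (j + 1), hfrel j, rfl⟩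
      exact this
  rw [← hf0]
  exact this j

lemma dset_relQIter_backward {z : Fin n → ℚ} (hz : z ∈ DSet V W φ) (j : ℕ) :
    ∃ u, RelQIter V W φ j u z := by
  obtain ⟨xs, hx0, _, hrel⟩ := hz
  exact ⟨xs (0 + j), hx0 ▸ relQIter_backward hrel 0 j⟩

lemma dset_memDomQ {z : Fin n → ℚ} (hz : z ∈ DSet V W φ) (k : ℕ) :
    memDomQ V W φ k z := by
  obtain ⟨y, hy⟩ := dset_relQIter_forward hz k
  obtain ⟨u, hu⟩ := dset_relQIter_backward hz k
  obtain ⟨p₁, hp₁, v₁, w₁, hint₁, hv₁, hw₁⟩ := relPowQ_iff_relQIter.2 hy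
  obtain ⟨p₂, hp₂, u₂, v₂, hint₂, hu₂, hv₂⟩ := relPowQ_iff_relQIter.2 hu
  have hvv : p₂ • v₁ = p₁ • v₂ := by
    apply embQ_injective
    rw [embQ_zsmul, embQ_zsmul, hv₁, hv₂, smul_comm]
  refine ⟨p₁ * p₂, mul_ne_zero hp₁ hp₂, p₂ • v₁, ?_, ⟨p₂ • w₁, intRelIter_smul p₂ k hint₁⟩,
    ⟨p₁ • u₂, hvv ▸ intRelIter_smul p₁ k hint₂⟩⟩
  rw [embQ_zsmul, hv₁, smul_smul, mul_comm]

lemma dset_subset_dsetPow {k : ℕ} : DSet V W φ ⊆ DSetPow V W φ k := by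
  intro x hx
  obtain ⟨xs, hx0, hmem, hrel⟩ := hx
  refine ⟨fun m => xs (k * m), by show xs (k * 0) = x; rw [Nat.mul_zero, hx0],
    fun m => ?_, fun m => ?_⟩
  · exact dset_memDomQ (dset_seq_mem hmem hrel (k * m)) k
  · apply relPowQ_iff_relQIter.2
    have : RelQIter V W φ k (xs (k * m + k)) (xs (k * m)) := relQIter_backward hrel (k * m) k
    rwa [show k * m + k = k * (m + 1) by ring] at this

lemma dsetPow_subset_dset {k : ℕ} (hk : 1 ≤ k) : DSetPow V W φ k ⊆ DSet V W φ := by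
  intro x hx
  obtain ⟨xs, hx0, hmem, hrel⟩ := hx
  -- the set of all points on backward chains ending at some `xs m`
  set S : Set (Fin n → ℚ) := {z | ∃ m j, RelQIter V W φ j z (xs m)} with hS
  -- long chains between the `xs m`
  have chains : ∀ m L, RelQIter V W φ (L * k) (xs (m + L)) (xs m) := by
    intro m L
    induction L with
    | zero => rw [Nat.zero_mul]; exact rfl
    | succ L ih =>
      have h1 : RelQIter V W φ k (xs (m + L + 1)) (xs (m + L)) :=
        relPowQ_iff_relQIter.1 (hrel (m + L))
      have := relQIter_comp (a := k) (b := L * k) h1 ih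
      rwa [show k + L * k = (L + 1) * k by ring, show m + L + 1 = m + (L + 1) by ring] at this
  -- every point of S has a predecessor in S
  have pred : ∀ z ∈ S, ∃ z', z' ∈ S ∧ RelQ V W φ z' z := by
    rintro z ⟨m, j, hchain⟩
    have hjk : j + 1 ≤ (j + 1) * k := Nat.le_mul_of_pos_right (j + 1) (by omega)
    have hsplit := chains m (j + 1)
    obtain ⟨s, hs⟩ : ∃ s, (j + 1) * k = (s + 1) + j := ⟨(j + 1) * k - j - 1, by omega⟩
    rw [hs] at hsplit
    obtain ⟨z₁, hz1, hz2⟩ := relQIter_split hsplit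
    have hz₁z : z₁ = z := relQIter_unique_left hz2 hchain
    rw [hz₁z] at hz1
    obtain ⟨z'', hz3, hz4⟩ := relQIter_split (a := s) (b := 1) hz1
    obtain ⟨w, hw, hwz⟩ := hz4
    have hwz' : w = z := hwz
    rw [hwz'] at hw
    refine ⟨z'', ⟨m, 1 + j, relQIter_comp (a := 1) (b := j) ⟨z, hw, rfl⟩ hchain⟩, hw⟩
  -- every point of S lies in `(V ⊓ W) ⊗ ℚ`
  have memS : ∀ z ∈ S, z ∈ qSpan n (V ⊓ W) := by
    rintro z hzS
    obtain ⟨m, j, hchain⟩ := hzS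
    rw [mem_qSpan_inf]
    constructor
    · -- z ∈ qSpan V
      cases j with
      | zero =>
        have hz : z = xs m := hchain
        subst hz
        obtain ⟨p, hp, v, hv, ⟨w, hw⟩, -⟩ := hmem m
        exact mem_qSpan_iff.2 ⟨p, hp, v, intRelIter_left_mem hk hw, hv⟩
      | succ j =>
        obtain ⟨w, hw, -⟩ := hchain
        exact relQ_mem_left hw
    · -- z ∈ qSpan W
      obtain ⟨z', -, hz'⟩ := pred z ⟨m, j, hchain⟩
      exact relQ_mem_right hz'
  -- build the backward orbit inside S
  have hxS : x ∈ S := ⟨0, 0, show x = xs 0 from hx0.symm⟩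
  have step : ∀ z : {z : Fin n → ℚ // z ∈ S}, {z' : Fin n → ℚ // z' ∈ S ∧ RelQ V W φ z' z} :=
    fun z => ⟨Classical.choose (pred z.1 z.2), Classical.choose_spec (pred z.1 z.2)⟩
  let g : ℕ → {z : Fin n → ℚ // z ∈ S} := fun i =>
    Nat.rec ⟨x, hxS⟩ (fun _ z => ⟨(step z).1, (step z).2.1⟩) i
  refine ⟨fun i => (g i).1, rfl, fun i => memS _ (g i).2, fun i => (step (g i)).2.2⟩

end Assembly


/-- Proposition 7.1(2): for every `k ≥ 1`, `D_{φ^k} = D_φ` and `(φ^k)~ = (φ̃)^k`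
(as maps on `D_φ`); moreover `D_{φ^{-1}} = D_φ` and `(φ^{-1})~ = (φ̃)^{-1}`. -/
theorem statement2 (n : ℕ) (V W : AddSubgroup (Fin n → ℤ)) (φ : V ≃+ W)
    (k : ℕ) (hk : 1 ≤ k) :
    (DSetPow V W φ k = DSet V W φ ∧
      ∀ x y : Fin n → ℚ, x ∈ DSet V W φ →
        (RelPowQ V W φ k x y ↔ RelQIter V W φ k x y)) ∧
    (DSet W V φ.symm = DSet V W φ ∧
      ∀ x y : Fin n → ℚ, x ∈ DSet V W φ →
        (RelQ W V φ.symm x y ↔ RelQ V W φ y x)) := by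
  refine ⟨⟨Set.Subset.antisymm (dsetPow_subset_dset hk) dset_subset_dsetPow,
    fun x y _ => relPowQ_iff_relQIter⟩,
    dset_symm_eq, fun x y _ => relQ_symm.symm⟩
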